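/- Let N ≥ 2 and let x ∈ ℂ^N with x[1] ≠ 0. Then there exist real numbers γ_{m,n} (m = 1,…,4; n = 1,…,N−1) such that the Hermitian matrix Y = Σ_{n=1}^{N−1} Σ_{m=1}^{4} γ_{m,n} · ψ_{m,n} ψ_{m,n}* satisfies Y x = 0 and ⟨Y u, u⟩ > 0 for every nonzero u ∈ ℂ^N with ⟨u, x⟩ = 0. (Existence of a dual certificate in the range of A_Ψ* for signals in S_Ψ.) -/

import Mathlib

open Complex Matrix MeasureTheory

noncomputable section

/-- α = √((1 − 1/√3)/2) -/
def alph : ℂ := (Real.sqrt ((1 - 1/Real.sqrt 3)/2) : ℝ)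

/-- β = e^{i5π/4}·√((1 + 1/√3)/2) -/
def beta : ℂ := Complex.exp (Complex.I * (5 * (Real.pi : ℂ) / 4)) *
  (Real.sqrt ((1 + 1/Real.sqrt 3)/2) : ℝ)

/-- the four frame vectors a₁ = (α,β), a₂ = (β,α), a₃ = (α,−β), a₄ = (−β,α) in ℂ² -/
def coef : Fin 4 → Fin 2 → ℂ := ![![alph, beta], ![beta, alph], ![alph, -beta], ![-beta, alph]]

/-- inner product ⟨x,y⟩ = Σ x[n]·conj(y[n]) -/
def inn {N : ℕ} (x y : Fin N → ℂ) : ℂ := ∑ i, x i * (starRingEnd ℂ) (y i)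

/-- Euclidean norm ‖x‖ = √⟨x,x⟩ -/
def nrm {N : ℕ} (x : Fin N → ℂ) : ℝ := Real.sqrt (inn x x).re

/-- outer product x y* -/
def outer {N : ℕ} (x y : Fin N → ℂ) : Matrix (Fin N) (Fin N) ℂ :=
  fun i j => x i * (starRingEnd ℂ) (y j)

/-- measurement vectors φ_{m,n} (0-based n: nonzero entries at positions n and n+1) -/
def phiv (N : ℕ) (m : Fin 4) (n : ℕ) : Fin N → ℂ :=
  fun i => if (i : ℕ) = n then coef m 0 else if (i : ℕ) = n + 1 then coef m 1 else 0

/-- measurement vectors ψ_{m,n} (0-based n: nonzero entries at positions 0 and n+1) -/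
def psiv (N : ℕ) (m : Fin 4) (n : ℕ) : Fin N → ℂ :=
  fun i => if (i : ℕ) = 0 then coef m 0 else if (i : ℕ) = n + 1 then coef m 1 else 0

/-- Hilbert–Schmidt inner product ⟨X,Y⟩ = trace(Y*X) -/
def hs {N : ℕ} (X Y : Matrix (Fin N) (Fin N) ℂ) : ℂ := Matrix.trace (Yᴴ * X)

/-- Frobenius (Hilbert–Schmidt) norm -/
def frob {N : ℕ} (X : Matrix (Fin N) (Fin N) ℂ) : ℝ := Real.sqrt (Matrix.trace (Xᴴ * X)).re

/-- spectral norm (largest singular value) -/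
def specNorm {N : ℕ} (A : Matrix (Fin N) (Fin N) ℂ) : ℝ :=
  sSup {r : ℝ | ∃ v : Fin N → ℂ, nrm v ≤ 1 ∧ r = nrm (A.mulVec v)}
namespace DC

def aR : ℝ := Real.sqrt ((1 - 1/Real.sqrt 3)/2)
def bR : ℝ := -(Real.sqrt 2/2) * Real.sqrt ((1 + 1/Real.sqrt 3)/2)
def U : ℝ := 1/Real.sqrt 3

lemma U_pos : 0 < U := by
  have : (0:ℝ) < Real.sqrt 3 := Real.sqrt_pos.2 (by norm_num)
  exact div_pos one_pos this

lemma U_lt_one : U < 1 := by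
  have h1 : (1:ℝ) < Real.sqrt 3 := by
    have := Real.sqrt_lt_sqrt (by norm_num : (0:ℝ) ≤ 1) (by norm_num : (1:ℝ) < 3)
    simpa using this
  rw [U, div_lt_one (by linarith)]; exact h1

lemma aR_sq : aR^2 = (1 - U)/2 := by
  rw [aR, Real.sq_sqrt]
  · rfl
  · have := U_lt_one; have := U_pos; unfold U at *; linarith

lemma bR_sq : bR^2 = (1 + U)/4 := by
  have hB : (0:ℝ) ≤ (1 + 1/Real.sqrt 3)/2 := by have := U_pos; unfold U at this; linarith
  have h2 : (Real.sqrt 2)^2 = 2 := Real.sq_sqrt (by norm_num)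
  rw [bR]
  have : (-(Real.sqrt 2/2) * Real.sqrt ((1 + 1/Real.sqrt 3)/2))^2
      = (Real.sqrt 2)^2/4 * (Real.sqrt ((1 + 1/Real.sqrt 3)/2))^2 := by ring
  rw [this, h2, Real.sq_sqrt hB]; unfold U; ring

lemma aR_pos : 0 < aR := by
  apply Real.sqrt_pos.2
  have := U_lt_one; unfold U at this; linarith

lemma bR_neg : bR < 0 := by
  have h2 : (0:ℝ) < Real.sqrt 2 := Real.sqrt_pos.2 (by norm_num)
  have hB : (0:ℝ) < Real.sqrt ((1 + 1/Real.sqrt 3)/2) := by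
    apply Real.sqrt_pos.2; have := U_pos; unfold U at this; linarith
  rw [bR]; nlinarith

lemma alph_eq : alph = (aR : ℂ) := rfl

lemma beta_eq : beta = (bR : ℂ) * (1 + Complex.I) := by
  have h5 : Complex.I * (5 * (Real.pi : ℂ) / 4) = ((5 * Real.pi / 4 : ℝ) : ℂ) * Complex.I := by
    push_cast; ring
  rw [beta, h5, Complex.exp_mul_I]
  rw [← Complex.ofReal_cos, ← Complex.ofReal_sin]
  have hc : Real.cos (5 * Real.pi / 4) = -(Real.sqrt 2/2) := by
    have h : 5 * Real.pi / 4 = Real.pi/4 + Real.pi := by ring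
    rw [h, Real.cos_add_pi, Real.cos_pi_div_four]
  have hs : Real.sin (5 * Real.pi / 4) = -(Real.sqrt 2/2) := by
    have h : 5 * Real.pi / 4 = Real.pi/4 + Real.pi := by ring
    rw [h, Real.sin_add_pi, Real.sin_pi_div_four]
  rw [hc, hs, bR]
  push_cast
  ring

def sF (h00 h11 : ℝ) : ℝ := ((1-U)/2*h00 - (1+U)/2*h11)/(-U)
def tF (h00 h11 : ℝ) : ℝ := ((1-U)/2*h11 - (1+U)/2*h00)/(-U)
def pF (z : ℂ) : ℝ := (z.re - z.im)/(2*(aR*bR))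
def qF (z : ℂ) : ℝ := (z.re + z.im)/(2*(aR*bR))
def gam (h00 h11 : ℝ) (z : ℂ) : Fin 4 → ℝ :=
  ![(sF h00 h11 + pF z)/2, (tF h00 h11 + qF z)/2, (sF h00 h11 - pF z)/2, (tF h00 h11 - qF z)/2]

lemma hab : aR * bR ≠ 0 := by
  have := aR_pos; have := bR_neg; intro h; nlinarith

lemma key00 (h00 h11 : ℝ) (z : ℂ) :
    ∑ m : Fin 4, ((gam h00 h11 z m : ℝ) : ℂ) * (coef m 0 * (starRingEnd ℂ) (coef m 0)) = (h00:ℂ) := by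
  have hU : U ≠ 0 := ne_of_gt U_pos
  have ha := aR_sq
  have hb := bR_sq
  rw [Fin.sum_univ_four]
  simp [gam, coef, alph_eq, beta_eq, Complex.ext_iff, Complex.conj_ofReal]
  have ha2 : aR*aR = (1-U)/2 := by nlinarith [ha]
  have hb2 : bR*bR + bR*bR = (1+U)/2 := by nlinarith [hb]
  rw [ha2, hb2]
  show (sF h00 h11 + pF z) / 2 * ((1 - U) / 2) + (tF h00 h11 + qF z) / 2 * ((1 + U) / 2) +
        (sF h00 h11 - pF z) / 2 * ((1 - U) / 2) +
      (tF h00 h11 - qF z) / 2 * ((1 + U) / 2) = h00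
  rw [sF, tF]
  field_simp
  ring

lemma key11 (h00 h11 : ℝ) (z : ℂ) :
    ∑ m : Fin 4, ((gam h00 h11 z m : ℝ) : ℂ) * (coef m 1 * (starRingEnd ℂ) (coef m 1)) = (h11:ℂ) := by
  have hU : U ≠ 0 := ne_of_gt U_pos
  have ha := aR_sq
  have hb := bR_sq
  rw [Fin.sum_univ_four]
  simp [gam, coef, alph_eq, beta_eq, Complex.ext_iff, Complex.conj_ofReal]
  have ha2 : aR*aR = (1-U)/2 := by nlinarith [ha]
  have hb2 : bR*bR + bR*bR = (1+U)/2 := by nlinarith [hb]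
  rw [ha2, hb2]
  show (sF h00 h11 + pF z) / 2 * ((1 + U) / 2) + (tF h00 h11 + qF z) / 2 * ((1 - U) / 2) +
        (sF h00 h11 - pF z) / 2 * ((1 + U) / 2) +
      (tF h00 h11 - qF z) / 2 * ((1 - U) / 2) = h11
  rw [sF, tF]
  field_simp
  ring

lemma key01 (h00 h11 : ℝ) (z : ℂ) :
    ∑ m : Fin 4, ((gam h00 h11 z m : ℝ) : ℂ) * (coef m 0 * (starRingEnd ℂ) (coef m 1)) = z := by
  have hc := hab
  rw [Fin.sum_univ_four]
  simp [gam, coef, alph_eq, beta_eq, Complex.ext_iff, Complex.conj_ofReal]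
  constructor
  · show (sF h00 h11 + pF z) / 2 * (aR * bR) + (tF h00 h11 + qF z) / 2 * (bR * aR)
        + -((sF h00 h11 - pF z) / 2 * (aR * bR)) + -((tF h00 h11 - qF z) / 2 * (bR * aR)) = z.re
    rw [pF, qF]
    field_simp
    have ha' : aR * aR⁻¹ = 1 := mul_inv_cancel₀ (left_ne_zero_of_mul hc)
    have hb' : bR * bR⁻¹ = 1 := mul_inv_cancel₀ (right_ne_zero_of_mul hc)
    linear_combination (z.re * 4 * bR * bR⁻¹) * ha' + (z.re * 4) * hb'
  · rw [pF, qF]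
    field_simp
    have ha' : aR * aR⁻¹ = 1 := mul_inv_cancel₀ (left_ne_zero_of_mul hc)
    have hb' : bR * bR⁻¹ = 1 := mul_inv_cancel₀ (right_ne_zero_of_mul hc)
    linear_combination (z.im * 4 * bR * bR⁻¹) * ha' + (z.im * 4) * hb'

lemma key10 (h00 h11 : ℝ) (z : ℂ) :
    ∑ m : Fin 4, ((gam h00 h11 z m : ℝ) : ℂ) * (coef m 1 * (starRingEnd ℂ) (coef m 0)) = (starRingEnd ℂ) z := by
  have hc := hab
  rw [Fin.sum_univ_four]
  simp [gam, coef, alph_eq, beta_eq, Complex.ext_iff, Complex.conj_ofReal]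
  constructor
  · rw [pF, qF]
    field_simp
    have ha' : aR * aR⁻¹ = 1 := mul_inv_cancel₀ (left_ne_zero_of_mul hc)
    have hb' : bR * bR⁻¹ = 1 := mul_inv_cancel₀ (right_ne_zero_of_mul hc)
    linear_combination (z.re * 4 * bR * bR⁻¹) * ha' + (z.re * 4) * hb'
  · rw [pF, qF]
    field_simp
    have ha' : aR * aR⁻¹ = 1 := mul_inv_cancel₀ (left_ne_zero_of_mul hc)
    have hb' : bR * bR⁻¹ = 1 := mul_inv_cancel₀ (right_ne_zero_of_mul hc)
    linear_combination -(z.im * 4 * bR * bR⁻¹) * ha' + -(z.im * 4) * hb'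

def wv (N : ℕ) (n : ℕ) (w0 w1 : ℂ) : Fin N → ℂ :=
  fun i => if (i:ℕ) = 0 then w0 else if (i:ℕ) = n+1 then w1 else 0

attribute [irreducible] gam sF tF pF qF aR bR

set_option maxHeartbeats 1000000 in
lemma block (N : ℕ) (n : ℕ) (w0 w1 : ℂ) :
    (∑ m : Fin 4, ((gam (normSq w0) (normSq w1) (w0 * (starRingEnd ℂ) w1) m : ℝ) : ℂ) •
        outer (psiv N m n) (psiv N m n))
      = outer (wv N n w0 w1) (wv N n w0 w1) := by
  ext i j
  simp only [Matrix.sum_apply, Matrix.smul_apply, smul_eq_mul, outer, psiv, wv]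
  have hn : ¬ (n + 1 = 0) := by omega
  by_cases hi0 : (i:ℕ) = 0 <;> by_cases hj0 : (j:ℕ) = 0 <;>
    by_cases hi1 : (i:ℕ) = n+1 <;> by_cases hj1 : (j:ℕ) = n+1 <;>
    simp only [hi0, hj0, hi1, hj1, hn, if_true, if_false, map_zero, mul_zero, zero_mul,
      Finset.sum_const_zero] <;>
    first
      | omega
      | (rw [Complex.mul_conj]; exact key00 _ _ _)
      | (rw [Complex.mul_conj]; exact key11 _ _ _)
      | (exact key01 _ _ _)
      | (rw [key10, _root_.map_mul, Complex.conj_conj]; ring)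
      | rfl
lemma sum_two {N : ℕ} (hN : 0 < N) {k : ℕ} (hk : k < N) (hk0 : k ≠ 0) (c0 c1 : ℂ)
    (f : Fin N → ℂ) :
    (∑ j : Fin N, (if (j:ℕ) = 0 then c0 else if (j:ℕ) = k then c1 else 0) * f j)
      = c0 * f ⟨0, hN⟩ + c1 * f ⟨k, hk⟩ := by
  have h : ∀ j : Fin N,
      (if (j:ℕ) = 0 then c0 else if (j:ℕ) = k then c1 else 0) * f j
      = (if j = ⟨0, hN⟩ then c0 * f ⟨0, hN⟩ else 0)
        + (if j = ⟨k, hk⟩ then c1 * f ⟨k, hk⟩ else 0) := by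
    intro j
    by_cases h0 : (j:ℕ) = 0
    · have : j = ⟨0, hN⟩ := Fin.ext h0
      subst this
      simp [h0, Fin.ext_iff, Ne.symm hk0]
    · by_cases h1 : (j:ℕ) = k
      · have : j = ⟨k, hk⟩ := Fin.ext h1
        subst this
        simp [h0, Fin.ext_iff, h1]
      · simp [h0, h1, Fin.ext_iff]
  rw [Finset.sum_congr rfl (fun j _ => h j), Finset.sum_add_distrib,
    Finset.sum_ite_eq' Finset.univ, Finset.sum_ite_eq' Finset.univ]
  simp

lemma sum_mulVec {N : ℕ} (s : Finset ℕ) (A : ℕ → Matrix (Fin N) (Fin N) ℂ) (v : Fin N → ℂ) :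
    (∑ n ∈ s, A n).mulVec v = ∑ n ∈ s, (A n).mulVec v := by
  ext i
  simp [Matrix.mulVec, dotProduct, Matrix.sum_apply, Finset.sum_mul]
  rw [Finset.sum_comm]

lemma inn_sum {N : ℕ} (s : Finset ℕ) (g : ℕ → Fin N → ℂ) (u : Fin N → ℂ) :
    inn (∑ n ∈ s, g n) u = ∑ n ∈ s, inn (g n) u := by
  simp [inn, Finset.sum_apply, Finset.sum_mul]
  rw [Finset.sum_comm]

lemma inn_outer_self {N : ℕ} (w u : Fin N → ℂ) :
    inn ((outer w w).mulVec u) u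
      = (∑ j, (starRingEnd ℂ) (w j) * u j) *
        (starRingEnd ℂ) (∑ j, (starRingEnd ℂ) (w j) * u j) := by
  simp only [inn, Matrix.mulVec, dotProduct, outer, map_sum, _root_.map_mul,
    Complex.conj_conj]
  rw [Finset.sum_mul_sum, Finset.sum_comm]
  apply Finset.sum_congr rfl
  intro i _
  rw [Finset.sum_mul]
  apply Finset.sum_congr rfl
  intro j _
  ring

end DC

open DC in
/-- Theorem 5 (part Ψ): for every x ∈ S_Ψ there is a dual certificate
Y = Σ_{m,n} γ_{m,n}·ψ_{m,n} ψ_{m,n}* in the range of A_Ψ* with Yx = 0 and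
Y positive definite on the orthogonal complement of x. -/
theorem dual_certificate_exists_Psi (N : ℕ) (hN : 2 ≤ N) (x : Fin N → ℂ)
    (hx : x ⟨0, by omega⟩ ≠ 0) :
    ∃ γ : Fin 4 → ℕ → ℝ,
      ((∑ n ∈ Finset.range (N - 1), ∑ m : Fin 4,
          (γ m n : ℂ) • outer (psiv N m n) (psiv N m n)).mulVec x = 0) ∧
      (∀ u : Fin N → ℂ, u ≠ 0 → inn u x = 0 →
        0 < (inn ((∑ n ∈ Finset.range (N - 1), ∑ m : Fin 4,
          (γ m n : ℂ) • outer (psiv N m n) (psiv N m n)).mulVec u) u).re) := by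
  have hN0 : 0 < N := by omega
  set x0 : ℂ := x ⟨0, by omega⟩ with hx0def
  set xe : ℕ → ℂ := (fun n => if h : n + 1 < N then x ⟨n+1, h⟩ else 0) with hxedef
  set W : ℕ → Fin N → ℂ := fun n => wv N n ((starRingEnd ℂ) (xe n)) (-((starRingEnd ℂ) x0))
    with hWdef
  refine ⟨fun m n => gam (normSq ((starRingEnd ℂ) (xe n))) (normSq (-((starRingEnd ℂ) x0)))
      (((starRingEnd ℂ) (xe n)) * (starRingEnd ℂ) (-((starRingEnd ℂ) x0))) m, ?_, ?_⟩
  case _ =>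
    rw [Finset.sum_congr rfl (fun n _ => block N n ((starRingEnd ℂ) (xe n)) (-((starRingEnd ℂ) x0))),
      sum_mulVec]
    apply Finset.sum_eq_zero
    intro n hn
    have hn' : n + 1 < N := by
      have := Finset.mem_range.1 hn; omega
    have hc : ∀ j : Fin N, (starRingEnd ℂ) (W n j)
        = (if (j:ℕ) = 0 then xe n else if (j:ℕ) = n+1 then -x0 else 0) := by
      intro j
      simp [hWdef, wv, apply_ite (starRingEnd ℂ)]
    have hxen : xe n = x ⟨n+1, hn'⟩ := by simp [hxedef, hn']
    have hdot : ∑ j, (starRingEnd ℂ) (W n j) * x j = 0 := by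
      rw [Finset.sum_congr rfl (fun j _ => by rw [hc j])]
      rw [sum_two hN0 hn' (by omega) (xe n) (-x0) x]
      rw [← hxen, ← hx0def]
      ring
    funext i
    show (∑ j, (W n i * (starRingEnd ℂ) (W n j)) * x j) = 0
    calc (∑ j, (W n i * (starRingEnd ℂ) (W n j)) * x j)
        = W n i * ∑ j, (starRingEnd ℂ) (W n j) * x j := by
          rw [Finset.mul_sum]
          exact Finset.sum_congr rfl (fun j _ => by ring)
      _ = 0 := by rw [hdot, mul_zero]
  case _ =>
    intro u hu hinn
    rw [Finset.sum_congr rfl (fun n _ => block N n ((starRingEnd ℂ) (xe n)) (-((starRingEnd ℂ) x0))),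
      sum_mulVec, inn_sum]
    set u0 : ℂ := u ⟨0, hN0⟩ with hu0def
    set ue : ℕ → ℂ := (fun n => if h : n + 1 < N then u ⟨n+1, h⟩ else 0) with huedef
    set t : ℕ → ℂ := fun n => xe n * u0 - x0 * ue n with htdef
    have hterm : ∀ n ∈ Finset.range (N-1),
        inn ((outer (W n) (W n)).mulVec u) u = ((normSq (t n) : ℝ) : ℂ) := by
      intro n hn
      have hn' : n + 1 < N := by have := Finset.mem_range.1 hn; omega
      have hc : ∀ j : Fin N, (starRingEnd ℂ) (W n j)
          = (if (j:ℕ) = 0 then xe n else if (j:ℕ) = n+1 then -x0 else 0) := by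
        intro j
        simp [hWdef, wv, apply_ite (starRingEnd ℂ)]
      have huen : ue n = u ⟨n+1, hn'⟩ := by simp [huedef, hn']
      have hdot : ∑ j, (starRingEnd ℂ) (W n j) * u j = t n := by
        rw [Finset.sum_congr rfl (fun j _ => by rw [hc j])]
        rw [sum_two hN0 hn' (by omega) (xe n) (-x0) u]
        rw [← huen, ← hu0def, htdef]
        ring
      rw [inn_outer_self, hdot, Complex.mul_conj]
    rw [Finset.sum_congr rfl hterm, Complex.re_sum]
    simp only [Complex.ofReal_re]
    apply Finset.sum_pos' (fun n _ => normSq_nonneg _)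
    by_contra hcon
    push_neg at hcon
    have htz : ∀ n ∈ Finset.range (N-1), t n = 0 := fun n hn =>
      normSq_eq_zero.1 (le_antisymm (hcon n hn) (normSq_nonneg _))
    -- decompose inn u x
    set F : ℕ → ℂ := fun k => if h : k < N then x0 * (u ⟨k, h⟩ * (starRingEnd ℂ) (x ⟨k, h⟩)) else 0
      with hFdef
    have h1 : x0 * inn u x = ∑ k ∈ Finset.range N, F k := by
      rw [← Fin.sum_univ_eq_sum_range, inn, Finset.mul_sum]
      apply Finset.sum_congr rfl
      intro i _
      simp [hFdef, i.isLt]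
    have h2 : ∑ k ∈ Finset.range N, F k = F 0 + ∑ n ∈ Finset.range (N-1), F (n+1) := by
      rw [show N = (N-1) + 1 by omega, Finset.sum_range_succ']
      simp [Nat.add_sub_cancel]
      ring
    have hF0 : F 0 = u0 * ((normSq x0 : ℝ) : ℂ) := by
      simp [hFdef, hN0, ← hx0def, ← hu0def]
      rw [← Complex.mul_conj]
      ring
    have hFn : ∀ n ∈ Finset.range (N-1), F (n+1) = u0 * ((normSq (xe n) : ℝ) : ℂ) := by
      intro n hn
      have hn' : n + 1 < N := by have := Finset.mem_range.1 hn; omega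
      have huen : ue n = u ⟨n+1, hn'⟩ := by simp [huedef, hn']
      have hxen : xe n = x ⟨n+1, hn'⟩ := by simp [hxedef, hn']
      have ht0 : x0 * ue n = xe n * u0 := by
        have := htz n hn
        rw [htdef] at this
        have : xe n * u0 - x0 * ue n = 0 := this
        linear_combination -this
      simp only [hFdef, dif_pos hn']
      rw [← huen, ← hxen]
      calc x0 * (ue n * (starRingEnd ℂ) (xe n)) = (x0 * ue n) * (starRingEnd ℂ) (xe n) := by ring
        _ = (xe n * u0) * (starRingEnd ℂ) (xe n) := by rw [ht0]
        _ = u0 * (xe n * (starRingEnd ℂ) (xe n)) := by ring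
        _ = u0 * ((normSq (xe n) : ℝ) : ℂ) := by rw [Complex.mul_conj]
    have hzero : u0 * (((normSq x0 + ∑ n ∈ Finset.range (N-1), normSq (xe n)) : ℝ) : ℂ) = 0 := by
      have : x0 * inn u x = u0 * (((normSq x0 + ∑ n ∈ Finset.range (N-1), normSq (xe n)) : ℝ) : ℂ) := by
        rw [h1, h2, hF0, Finset.sum_congr rfl hFn]
        push_cast
        rw [mul_add, Finset.mul_sum]
      rw [hinn, mul_zero] at this
      exact this.symm
    have hpos : (0:ℝ) < normSq x0 + ∑ n ∈ Finset.range (N-1), normSq (xe n) := by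
      have h1 : 0 < normSq x0 := normSq_pos.2 hx
      have h2 : 0 ≤ ∑ n ∈ Finset.range (N-1), normSq (xe n) :=
        Finset.sum_nonneg (fun n _ => normSq_nonneg _)
      linarith
    have hu0 : u0 = 0 := by
      rcases mul_eq_zero.1 hzero with h | h
      · exact h
      · exfalso
        have : ((normSq x0 + ∑ n ∈ Finset.range (N-1), normSq (xe n) : ℝ) : ℂ) ≠ 0 := by
          exact_mod_cast ne_of_gt hpos
        exact this h
    apply hu
    funext i
    show u i = 0
    by_cases hi : (i:ℕ) = 0
    · have : i = ⟨0, hN0⟩ := Fin.ext hi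
      rw [this, ← hu0def, hu0]
    · have hi1 : (i:ℕ) - 1 < N - 1 := by omega
      have hmem : (i:ℕ) - 1 ∈ Finset.range (N-1) := Finset.mem_range.2 hi1
      have hn' : ((i:ℕ) - 1) + 1 < N := by omega
      have hieq : i = ⟨((i:ℕ) - 1) + 1, hn'⟩ := Fin.ext (by simp only [Fin.val_mk]; omega)
      have ht0 := htz _ hmem
      rw [htdef] at ht0
      have hueq : ue ((i:ℕ)-1) = u ⟨((i:ℕ) - 1) + 1, hn'⟩ := by simp [huedef, hn']
      have hx0u : x0 * ue ((i:ℕ)-1) = xe ((i:ℕ)-1) * u0 := by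
        have : xe ((i:ℕ)-1) * u0 - x0 * ue ((i:ℕ)-1) = 0 := ht0
        linear_combination -this
      rw [hu0, mul_zero] at hx0u
      have : ue ((i:ℕ)-1) = 0 := by
        rcases mul_eq_zero.1 hx0u with h | h
        · exact absurd h hx
        · exact h
      rw [hieq, ← hueq, this]
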